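/- Let H be a cointerval d-graph on vertex set contained in {1,…,n}, let I = I_H be its edge ideal with minimal generators ordered lexicographically decreasing, and fix i ≥ 1. Then the map sending a pair (m, α), where m = x_{i_1}⋯x_{i_d} ∈ G(I) with i_1 < ⋯ < i_d (and i_0 := 0) and α ⊆ set(m) with |α| = i−1, to the tuple (σ_1,…,σ_d) with σ_ℓ := {i_ℓ} ∪ {j ∈ α : i_{ℓ−1} < j < i_ℓ} for 1 ≤ ℓ ≤ d, is a bijection from the set of such pairs (m,α) onto the set of cells of X_H of dimension i−1. -/

import Mathlib

open MvPolynomial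

/-- The monomial ideal generated by a set of exponent vectors. -/
noncomputable def genIdeal (K : Type*) [Field K] {n : ℕ} (ms : Set (Fin n →₀ ℕ)) :
    Ideal (MvPolynomial (Fin n) K) :=
  Ideal.span ((fun u => MvPolynomial.monomial u (1 : K)) '' ms)

/-- The colon ideal `⟨m_1, …, m_{j-1}⟩ : m_j`. -/
noncomputable def colonJ (K : Type*) [Field K] {n k : ℕ} (m : Fin k → (Fin n →₀ ℕ))
    (j : Fin k) : Ideal (MvPolynomial (Fin n) K) :=
  Submodule.colon (genIdeal K {u | ∃ i : Fin k, i < j ∧ u = m i})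
    (Ideal.span {MvPolynomial.monomial (m j) (1 : K)})

/-- `I` has linear quotients w.r.t. the ordering `m_1,…,m_k` of its generators:
each colon ideal is generated by a subset of the variables. -/
def HasLinearQuotients (K : Type*) [Field K] {n k : ℕ}
    (m : Fin k → (Fin n →₀ ℕ)) : Prop :=
  ∀ j : Fin k, ∃ S : Set (Fin n),
    colonJ K m j = Ideal.span ((fun s => (MvPolynomial.X s : MvPolynomial (Fin n) K)) '' S)

/-- `set(m_j) = {i : x_i ∈ ⟨m_1,…,m_{j-1}⟩ : m_j}`. -/
def mset (K : Type*) [Field K] {n k : ℕ} (m : Fin k → (Fin n →₀ ℕ)) (j : Fin k) :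
    Set (Fin n) :=
  {t | (MvPolynomial.X t : MvPolynomial (Fin n) K) ∈ colonJ K m j}

/-- The `m i` are minimal monomial generators: none divides another. -/
def MinimalGens {n k : ℕ} (m : Fin k → (Fin n →₀ ℕ)) : Prop :=
  ∀ i j : Fin k, m i ≤ m j → i = j

/-- `b` is the decomposition function: for a monomial `u ∈ I`, `b u` is the smallest
index `j` with `u ∈ ⟨m_1,…,m_j⟩`. -/
def IsDecompositionFunction (K : Type*) [Field K] {n k : ℕ}
    (m : Fin k → (Fin n →₀ ℕ)) (b : (Fin n →₀ ℕ) → Fin k) : Prop :=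
  ∀ u : Fin n →₀ ℕ, MvPolynomial.monomial u (1 : K) ∈ genIdeal K (Set.range m) →
    (MvPolynomial.monomial u (1 : K) ∈ genIdeal K {v | ∃ i : Fin k, i ≤ b u ∧ v = m i}) ∧
    (∀ j : Fin k,
      MvPolynomial.monomial u (1 : K) ∈ genIdeal K {v | ∃ i : Fin k, i ≤ j ∧ v = m i} →
      b u ≤ j)

/-- The decomposition function is regular: `set(b(x_t·m)) ⊆ set(m)` for every
generator `m` and every `t ∈ set(m)`. -/
def IsRegularDecomp (K : Type*) [Field K] {n k : ℕ}
    (m : Fin k → (Fin n →₀ ℕ)) (b : (Fin n →₀ ℕ) → Fin k) : Prop :=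
  ∀ j : Fin k, ∀ t ∈ mset K m j,
    mset K m (b (m j + Finsupp.single t 1)) ⊆ mset K m j

/-- The exponent vector of the squarefree monomial `x_{f 0} ⋯ x_{f (d-1)}`. -/
noncomputable def vecOfFin {n d : ℕ} (f : Fin d → Fin n) : Fin n →₀ ℕ :=
  ∑ l : Fin d, Finsupp.single (f l) 1

/-- The exchange property defining cointerval ideals: for every squarefree monomial
`x_{i_1}⋯x_{i_d} ∈ I` (`i_1 < … < i_d`), every `t ≤ d` and all `j_1 < … < j_t` with
`j_s ≤ i_s` and `{j_1,…,j_t} ∩ {i_{t+1},…,i_d} = ∅`, the monomial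
`x_{j_1}⋯x_{j_t}·x_{i_{t+1}}⋯x_{i_d}` also lies in `I`. -/
def CointervalIdeal (K : Type*) [Field K] {n : ℕ} (d : ℕ)
    (I : Ideal (MvPolynomial (Fin n) K)) : Prop :=
  ∀ f : Fin d → Fin n, StrictMono f →
    MvPolynomial.monomial (vecOfFin f) (1 : K) ∈ I →
    ∀ (t : ℕ) (ht : t ≤ d), ∀ g : Fin t → Fin n, StrictMono g →
      (∀ s : Fin t, g s ≤ f (Fin.castLE ht s)) →
      (∀ (s : Fin t) (l : Fin d), t ≤ (l : ℕ) → g s ≠ f l) →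
      MvPolynomial.monomial
          ((∑ s : Fin t, Finsupp.single (g s) 1) +
            ∑ l ∈ Finset.univ.filter (fun l : Fin d => t ≤ (l : ℕ)),
              Finsupp.single (f l) 1) (1 : K) ∈ I

/-- `u >_lex v` for exponent vectors: at the smallest index where they differ, `u` is
larger. -/
def lexGt {n : ℕ} (u v : Fin n →₀ ℕ) : Prop :=
  ∃ i : Fin n, (∀ j : Fin n, j < i → u j = v j) ∧ v i < u i

/-- The generators are listed in lexicographically decreasing order. -/
def LexDec {n k : ℕ} (m : Fin k → (Fin n →₀ ℕ)) : Prop :=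
  ∀ a b : Fin k, a < b → lexGt (m a) (m b)

/-- `u` is the exponent vector of a squarefree monomial of degree `d`. -/
def SqFreeDeg {n : ℕ} (d : ℕ) (u : Fin n →₀ ℕ) : Prop :=
  (∀ a : Fin n, u a ≤ 1) ∧ u.support.card = d

/-- The exponent vector of the squarefree monomial `∏_{v ∈ e} x_v`. -/
noncomputable def vecOfEdge {n : ℕ} (e : Finset (Fin n)) : Fin n →₀ ℕ :=
  ∑ v ∈ e, Finsupp.single v 1

/-- The map `(m, α) ↦ (σ_1,…,σ_d)`, `σ_ℓ := {i_ℓ} ∪ {j ∈ α : i_{ℓ−1} < j < i_ℓ}` where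
`supp(m) = {i_1 < … < i_d}` (and `i_0 = 0`).  Equivalently (0-based `l`): `σ_l` is the
set of `a ∈ supp(m) ∪ α` having exactly `l` elements of `supp(m)` below them. -/
def cellOfPair {n k d : ℕ} (m : Fin k → (Fin n →₀ ℕ))
    (p : Fin k × Finset (Fin n)) (l : Fin d) : Finset (Fin n) :=
  ((m p.1).support ∪ p.2).filter
    (fun a => ((m p.1).support.filter (· < a)).card = (l : ℕ))


/-! ### Auxiliary lemmas -/

section Aux
variable {K : Type*} [Field K] {n k d : ℕ}

lemma vecOfEdge_apply (e : Finset (Fin n)) (a : Fin n) :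
    vecOfEdge e a = if a ∈ e then 1 else 0 := by
  classical
  rw [vecOfEdge, Finsupp.finset_sum_apply]
  simp [Finsupp.single_apply, Finset.sum_ite_eq, eq_comm]

lemma vecOfEdge_support (e : Finset (Fin n)) : (vecOfEdge e).support = e := by
  ext a; simp [Finsupp.mem_support_iff, vecOfEdge_apply]

lemma vecOfEdge_le_one (e : Finset (Fin n)) (a : Fin n) : vecOfEdge e a ≤ 1 := by
  rw [vecOfEdge_apply]; split <;> simp

lemma vecOfEdge_le_iff {e e' : Finset (Fin n)} : vecOfEdge e ≤ vecOfEdge e' ↔ e ⊆ e' := by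
  constructor
  · intro h a ha
    have := h a
    rw [vecOfEdge_apply, vecOfEdge_apply, if_pos ha] at this
    by_contra hn; rw [if_neg hn] at this; omega
  · intro h a
    rw [vecOfEdge_apply, vecOfEdge_apply]
    by_cases ha : a ∈ e
    · rw [if_pos ha, if_pos (h ha)]
    · simp [ha]

lemma vecOfEdge_inj {e e' : Finset (Fin n)} (h : vecOfEdge e = vecOfEdge e') : e = e' := by
  rw [← vecOfEdge_support e, ← vecOfEdge_support e', h]

lemma eq_vecOfEdge_of_le {u : Fin n →₀ ℕ} {e : Finset (Fin n)}
    (hu : ∀ a, u a ≤ 1) (hle : vecOfEdge e ≤ u) (hcard : u.support.card ≤ e.card) :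
    u = vecOfEdge e := by
  have hsub : e ⊆ u.support := by
    intro a ha
    have := hle a
    rw [vecOfEdge_apply, if_pos ha] at this
    rw [Finsupp.mem_support_iff]; omega
  have heq : u.support = e := (Finset.eq_of_subset_of_card_le hsub hcard).symm
  ext a
  rw [vecOfEdge_apply]
  by_cases ha : a ∈ e
  · have h1 := hle a; rw [vecOfEdge_apply, if_pos ha] at h1
    have h2 := hu a; rw [if_pos ha]; omega
  · rw [if_neg ha]
    have : a ∉ u.support := by rw [heq]; exact ha
    simpa [Finsupp.mem_support_iff] using this

lemma vecOfEdge_singleton (t : Fin n) : vecOfEdge {t} = Finsupp.single t 1 := by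
  rw [vecOfEdge, Finset.sum_singleton]

lemma vecOfEdge_union {A B : Finset (Fin n)} (h : Disjoint A B) :
    vecOfEdge (A ∪ B) = vecOfEdge A + vecOfEdge B := by
  rw [vecOfEdge, Finset.sum_union h]; rfl

lemma vecOfEdge_insert {e : Finset (Fin n)} {t : Fin n} (ht : t ∉ e) :
    vecOfEdge (insert t e) = vecOfEdge e + Finsupp.single t 1 := by
  rw [Finset.insert_eq, Finset.union_comm, vecOfEdge_union (by simpa using ht),
    vecOfEdge_singleton]

lemma vecOfFin_eq_vecOfEdge (f : Fin d → Fin n) (hf : Function.Injective f) :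
    vecOfFin f = vecOfEdge (Finset.image f Finset.univ) := by
  rw [vecOfEdge, Finset.sum_image (fun a _ b _ h => hf h), vecOfFin]

lemma lexGt_asymm {u v : Fin n →₀ ℕ} (h1 : lexGt u v) (h2 : lexGt v u) : False := by
  obtain ⟨a, ha1, ha2⟩ := h1
  obtain ⟨b, hb1, hb2⟩ := h2
  rcases lt_trichotomy a b with h | h | h
  · have := hb1 a h; omega
  · subst h; omega
  · have := ha1 b h; omega

lemma mem_genIdeal_iff {ms : Set (Fin n →₀ ℕ)} {u : Fin n →₀ ℕ} :
    MvPolynomial.monomial u (1 : K) ∈ genIdeal K ms ↔ ∃ v ∈ ms, v ≤ u := by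
  rw [genIdeal, MvPolynomial.mem_ideal_span_monomial_image]
  simp [MvPolynomial.support_monomial]

lemma X_mem_colonJ_iff {m : Fin k → (Fin n →₀ ℕ)} {j : Fin k} {t : Fin n} :
    (MvPolynomial.X t : MvPolynomial (Fin n) K) ∈ colonJ K m j ↔
      ∃ i : Fin k, i < j ∧ m i ≤ m j + Finsupp.single t 1 := by
  have hX : (MvPolynomial.X t : MvPolynomial (Fin n) K) * MvPolynomial.monomial (m j) 1
      = MvPolynomial.monomial (m j + Finsupp.single t 1) (1 : K) := by
    rw [MvPolynomial.X, MvPolynomial.monomial_mul, one_mul, add_comm]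
  rw [colonJ, Submodule.mem_colon]
  constructor
  · intro h
    have := h (MvPolynomial.monomial (m j) 1) (Ideal.subset_span rfl)
    rw [smul_eq_mul, hX, mem_genIdeal_iff] at this
    obtain ⟨v, ⟨i, hij, rfl⟩, hle⟩ := this
    exact ⟨i, hij, hle⟩
  · intro ⟨i, hij, hle⟩ p hp
    rw [SetLike.mem_coe, Ideal.mem_span_singleton] at hp
    obtain ⟨q, rfl⟩ := hp
    rw [smul_eq_mul, show (MvPolynomial.X t : MvPolynomial (Fin n) K) *
        (MvPolynomial.monomial (m j) 1 * q)
      = q * (MvPolynomial.X t * MvPolynomial.monomial (m j) 1) by ring, hX]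
    exact Ideal.mul_mem_left _ q (mem_genIdeal_iff.mpr ⟨m i, ⟨i, hij, rfl⟩, hle⟩)

lemma downclosed_mem_iff (T : Finset (Fin d))
    (hT : ∀ a b : Fin d, a ≤ b → b ∈ T → a ∈ T) (l : Fin d) :
    l ∈ T ↔ (l : ℕ) < T.card := by
  constructor
  · intro hl
    have hsub : Finset.Iic l ⊆ T := fun a ha => hT a l (Finset.mem_Iic.mp ha) hl
    have := Finset.card_le_card hsub
    rw [Fin.card_Iic] at this; omega
  · intro hl
    by_contra hn
    have hsub : T ⊆ Finset.Iio l := by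
      intro b hb
      rw [Finset.mem_Iio]
      by_contra hbl
      exact hn (hT l b (le_of_not_gt hbl) hb)
    have := Finset.card_le_card hsub
    rw [Fin.card_Iio] at this; omega

variable {H : Finset (Finset (Fin n))} {m : Fin k → (Fin n →₀ ℕ)}

lemma exists_edge (hgens : Set.range m = (fun e : Finset (Fin n) => vecOfEdge e) '' ↑H)
    (j : Fin k) : ∃ e ∈ H, m j = vecOfEdge e := by
  have : m j ∈ Set.range m := ⟨j, rfl⟩
  rw [hgens] at this
  obtain ⟨e, he, h⟩ := this
  exact ⟨e, he, h.symm⟩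

lemma lt_of_lexGt (hlex : LexDec m) {a b : Fin k} (h : lexGt (m a) (m b)) : a < b := by
  rcases lt_trichotomy a b with h' | h' | h'
  · exact h'
  · subst h'; exact absurd h (fun hh => lexGt_asymm hh hh)
  · exact absurd (hlex b a h') (fun hh => lexGt_asymm h hh)

end Aux

section Emb
variable {n d : ℕ} {e : Finset (Fin n)}

lemma card_T_eq (hcard : e.card = d) (t : Fin n) :
    (Finset.univ.filter (fun l : Fin d => e.orderEmbOfFin hcard l < t)).card =
      (e.filter (· < t)).card := by
  classical
  set f := e.orderEmbOfFin hcard with hf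
  rw [← Finset.card_image_of_injective _ f.injective]
  congr 1
  ext a
  simp only [Finset.mem_image, Finset.mem_filter, Finset.mem_univ, true_and]
  constructor
  · rintro ⟨l, hl, rfl⟩; exact ⟨Finset.orderEmbOfFin_mem e hcard l, hl⟩
  · rintro ⟨hae, hat⟩
    have : a ∈ Set.range f := by rw [hf, Finset.range_orderEmbOfFin]; exact hae
    obtain ⟨l, rfl⟩ := this
    exact ⟨l, hat, rfl⟩

lemma orderEmb_lt_iff (hcard : e.card = d) (t : Fin n) (l : Fin d) :
    e.orderEmbOfFin hcard l < t ↔ (l : ℕ) < (e.filter (· < t)).card := by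
  classical
  rw [← card_T_eq hcard t]
  rw [← downclosed_mem_iff (Finset.univ.filter (fun l : Fin d => e.orderEmbOfFin hcard l < t))
    (by
      intro a b hab hb
      simp only [Finset.mem_filter, Finset.mem_univ, true_and] at *
      exact lt_of_le_of_lt ((e.orderEmbOfFin hcard).monotone hab) hb) l]
  simp

lemma count_orderEmb (hcard : e.card = d) (l : Fin d) :
    (e.filter (· < e.orderEmbOfFin hcard l)).card = (l : ℕ) := by
  classical
  rw [← card_T_eq hcard]
  have : (Finset.univ.filter
      (fun l' : Fin d => e.orderEmbOfFin hcard l' < e.orderEmbOfFin hcard l)) =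
      Finset.Iio l := by
    ext l'
    simp [(e.orderEmbOfFin hcard).lt_iff_lt]
  rw [this, Fin.card_Iio]

lemma count_lt_of_mem (hcard : e.card = d) {a : Fin n} (ha : a ∈ e) :
    (e.filter (· < a)).card < d := by
  classical
  have hsub : e.filter (· < a) ⊆ e.erase a := by
    intro b hb
    rw [Finset.mem_filter] at hb
    exact Finset.mem_erase.mpr ⟨ne_of_lt hb.2, hb.1⟩
  have := Finset.card_le_card hsub
  rw [Finset.card_erase_of_mem ha, hcard] at this
  have : 0 < d := by
    rw [← hcard]
    exact Finset.card_pos.mpr ⟨a, ha⟩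
  omega

lemma orderEmb_count_eq (hcard : e.card = d) {a : Fin n} (ha : a ∈ e)
    (hlt : (e.filter (· < a)).card < d) :
    e.orderEmbOfFin hcard ⟨(e.filter (· < a)).card, hlt⟩ = a := by
  classical
  have : a ∈ Set.range (e.orderEmbOfFin hcard) := by
    rw [Finset.range_orderEmbOfFin]; exact ha
  obtain ⟨l, rfl⟩ := this
  have := count_orderEmb hcard l
  congr 1
  exact Fin.ext (by simpa using this)

end Emb

/-- The `l`-th block of the cell associated to `(e, α)`. -/
def cellSigma {n : ℕ} (d : ℕ) (e α : Finset (Fin n)) (l : Fin d) : Finset (Fin n) :=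
  (e ∪ α).filter (fun a => (e.filter (· < a)).card = (l : ℕ))

section Cells
variable {n d : ℕ} {e α : Finset (Fin n)}

lemma mem_cellSigma {l : Fin d} {a : Fin n} :
    a ∈ cellSigma d e α l ↔ a ∈ e ∪ α ∧ (e.filter (· < a)).card = (l : ℕ) := by
  simp [cellSigma]

lemma image_orderEmbOfFin (hcard : e.card = d) :
    Finset.image ⇑(e.orderEmbOfFin hcard) Finset.univ = e := by
  ext a
  simp only [Finset.mem_image, Finset.mem_univ, true_and]
  constructor
  · rintro ⟨l, rfl⟩; exact Finset.orderEmbOfFin_mem e hcard l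
  · intro ha
    have : a ∈ Set.range (e.orderEmbOfFin hcard) := by
      rw [Finset.range_orderEmbOfFin]; exact ha
    exact this

lemma cnt_lt_d (hcard : e.card = d) (hα : ∀ t ∈ α, t ∉ e ∧ ∃ s ∈ e, t < s)
    {a : Fin n} (ha : a ∈ e ∪ α) : (e.filter (· < a)).card < d := by
  rcases Finset.mem_union.mp ha with h | h
  · exact count_lt_of_mem hcard h
  · obtain ⟨-, s, hs, hts⟩ := hα a h
    have hd : 0 < d := hcard ▸ Finset.card_pos.mpr ⟨s, hs⟩
    have hsub : e.filter (· < a) ⊆ e.erase s := by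
      intro b hb
      rw [Finset.mem_filter] at hb
      exact Finset.mem_erase.mpr ⟨ne_of_lt (hb.2.trans hts), hb.1⟩
    have := Finset.card_le_card hsub
    rw [Finset.card_erase_of_mem hs, hcard] at this
    omega

lemma orderEmb_mem_cellSigma (hcard : e.card = d) (l : Fin d) :
    e.orderEmbOfFin hcard l ∈ cellSigma d e α l :=
  mem_cellSigma.mpr ⟨Finset.mem_union_left _ (Finset.orderEmbOfFin_mem e hcard l),
    count_orderEmb hcard l⟩

lemma le_of_mem_cellSigma (hcard : e.card = d) {l : Fin d} {a : Fin n}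
    (ha : a ∈ cellSigma d e α l) : a ≤ e.orderEmbOfFin hcard l := by
  obtain ⟨-, hcnt⟩ := mem_cellSigma.mp ha
  by_contra h
  have := (orderEmb_lt_iff hcard a l).mp (lt_of_not_ge h)
  omega

lemma lt_of_cellSigma {l l' : Fin d} {a b : Fin n} (ha : a ∈ cellSigma d e α l)
    (hb : b ∈ cellSigma d e α l') (hll : l < l') : a < b := by
  obtain ⟨-, hca⟩ := mem_cellSigma.mp ha
  obtain ⟨-, hcb⟩ := mem_cellSigma.mp hb
  by_contra h
  have hsub : e.filter (· < b) ⊆ e.filter (· < a) := by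
    intro x hx
    rw [Finset.mem_filter] at *
    exact ⟨hx.1, lt_of_lt_of_le hx.2 (le_of_not_gt h)⟩
  have := Finset.card_le_card hsub
  have := Fin.lt_iff_val_lt_val.mp hll
  omega

lemma max'_cellSigma (hcard : e.card = d) {l : Fin d} (h : (cellSigma d e α l).Nonempty) :
    (cellSigma d e α l).max' h = e.orderEmbOfFin hcard l :=
  le_antisymm (Finset.max'_le _ _ _ (fun a ha => le_of_mem_cellSigma hcard ha))
    (Finset.le_max' _ _ (orderEmb_mem_cellSigma hcard l))

lemma biUnion_cellSigma (hcard : e.card = d) (hα : ∀ t ∈ α, t ∉ e ∧ ∃ s ∈ e, t < s) :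
    Finset.univ.biUnion (cellSigma d e α) = e ∪ α := by
  classical
  ext a
  rw [Finset.mem_biUnion]
  constructor
  · rintro ⟨l, -, hl⟩; exact (mem_cellSigma.mp hl).1
  · intro ha
    exact ⟨⟨_, cnt_lt_d hcard hα ha⟩, Finset.mem_univ _, mem_cellSigma.mpr ⟨ha, rfl⟩⟩

lemma pairwise_disjoint_cellSigma {l l' : Fin d} (h : l ≠ l') :
    Disjoint (cellSigma d e α l) (cellSigma d e α l') := by
  rw [Finset.disjoint_left]
  intro a ha ha'
  obtain ⟨-, h1⟩ := mem_cellSigma.mp ha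
  obtain ⟨-, h2⟩ := mem_cellSigma.mp ha'
  exact h (Fin.ext (by omega))

lemma sum_card_cellSigma (hcard : e.card = d) (hα : ∀ t ∈ α, t ∉ e ∧ ∃ s ∈ e, t < s) :
    ∑ l : Fin d, (cellSigma d e α l).card = d + α.card := by
  classical
  have hdisj : Disjoint e α := by
    rw [Finset.disjoint_right]
    exact fun a ha => (hα a ha).1
  have h1 : (Finset.univ.biUnion (cellSigma d e α)).card
      = ∑ l : Fin d, (cellSigma d e α l).card :=
    Finset.card_biUnion (fun l _ l' _ h => pairwise_disjoint_cellSigma h)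
  rw [biUnion_cellSigma hcard hα, Finset.card_union_of_disjoint hdisj, hcard] at h1
  omega

lemma alpha_eq_cellSigma (hcard : e.card = d) (hα : ∀ t ∈ α, t ∉ e ∧ ∃ s ∈ e, t < s) :
    α = Finset.univ.biUnion (cellSigma d e α) \ e := by
  classical
  rw [biUnion_cellSigma hcard hα]
  ext a
  rw [Finset.mem_sdiff, Finset.mem_union]
  constructor
  · intro ha; exact ⟨Or.inr ha, (hα a ha).1⟩
  · rintro ⟨h | h, he'⟩
    · exact absurd h he'
    · exact h

lemma count_image_max' {σ : Fin d → Finset (Fin n)} (hne : ∀ l, (σ l).Nonempty)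
    (hord : ∀ l l' : Fin d, l < l' → ∀ a ∈ σ l, ∀ b ∈ σ l', a < b)
    {l : Fin d} {a : Fin n} (ha : a ∈ σ l) :
    ((Finset.image (fun l' => (σ l').max' (hne l')) Finset.univ).filter (· < a)).card
      = (l : ℕ) := by
  classical
  set f : Fin d → Fin n := fun l' => (σ l').max' (hne l') with hf
  have hfmem : ∀ l', f l' ∈ σ l' := fun l' => (σ l').max'_mem (hne l')
  have hfmono : StrictMono f := fun l1 l2 h => hord l1 l2 h _ (hfmem l1) _ (hfmem l2)
  have hfilter : (Finset.image f Finset.univ).filter (· < a) =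
      Finset.image f (Finset.Iio l) := by
    ext b
    simp only [Finset.mem_filter, Finset.mem_image, Finset.mem_univ, true_and,
      Finset.mem_Iio]
    constructor
    · rintro ⟨⟨l'', rfl⟩, hb⟩
      refine ⟨l'', ?_, rfl⟩
      rcases lt_trichotomy l'' l with h | h | h
      · exact h
      · subst h
        exact absurd (Finset.le_max' _ _ ha) (not_le.mpr hb)
      · exact absurd (hord l l'' h a ha _ (hfmem l'')) (asymm hb)
    · rintro ⟨l'', hl'', rfl⟩
      exact ⟨⟨l'', rfl⟩, hord l'' l hl'' _ (hfmem l'') a ha⟩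
  rw [hfilter, Finset.card_image_of_injective _ hfmono.injective, Fin.card_Iio]

end Cells

section Swap
variable {K : Type*} [Field K] {n k d : ℕ}
variable {H : Finset (Finset (Fin n))} {m : Fin k → (Fin n →₀ ℕ)}

lemma swap_lemma (hH : ∀ e ∈ H, e.card = d)
    (hgens : Set.range m = (fun e : Finset (Fin n) => vecOfEdge e) '' ↑H)
    (hlex : LexDec m)
    (hco : CointervalIdeal K d (genIdeal K (Set.range m)))
    {j : Fin k} {e : Finset (Fin n)} (he : e ∈ H) (hme : m j = vecOfEdge e)
    {t s : Fin n} (ht : t ∉ e) (hs : s ∈ e) (hts : t < s) :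
    ∃ i : Fin k, i < j ∧ m i ≤ m j + Finsupp.single t 1 := by
  classical
  have hcard : e.card = d := hH e he
  set f := e.orderEmbOfFin hcard with hf
  set T : Finset (Fin d) := Finset.univ.filter (fun l => f l < t) with hT
  have hTdc : ∀ a b : Fin d, a ≤ b → b ∈ T → a ∈ T := by
    intro a b hab hb
    simp only [hT, Finset.mem_filter, Finset.mem_univ, true_and] at *
    exact lt_of_le_of_lt (f.monotone hab) hb
  set c := T.card with hc
  have hmemT : ∀ l : Fin d, f l < t ↔ (l : ℕ) < c := by
    intro l
    rw [← downclosed_mem_iff T hTdc l]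
    simp [hT]
  have hrange : ∀ a ∈ e, ∃ l : Fin d, f l = a := by
    intro a ha
    have : a ∈ Set.range f := by rw [hf, Finset.range_orderEmbOfFin]; exact ha
    exact this
  have hfe : ∀ l : Fin d, f l ∈ e := fun l => Finset.orderEmbOfFin_mem e hcard l
  have hcd : c < d := by
    obtain ⟨ls, rfl⟩ := hrange s hs
    have h1 : ¬ f ls < t := asymm hts
    have := (hmemT ls).not.mp h1
    omega
  have hc1d : c + 1 ≤ d := hcd
  set g : Fin (c + 1) → Fin n :=
    fun s' => if h : (s' : ℕ) < c then f ⟨s', h.trans hcd⟩ else t with hg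
  have hgval_lt : ∀ (s' : Fin (c+1)) (h : (s' : ℕ) < c), g s' = f ⟨s', h.trans hcd⟩ := by
    intro s' h; simp [hg, h]
  have hgval_eq : ∀ (s' : Fin (c+1)), ¬ (s' : ℕ) < c → g s' = t := by
    intro s' h; simp [hg, h]
  have hflt : ∀ (l : Fin d), (l : ℕ) < c → f l < t := fun l h => (hmemT l).mpr h
  have hfge : ∀ (l : Fin d), ¬ (l : ℕ) < c → t < f l := by
    intro l h
    have h1 : ¬ f l < t := fun hh => h ((hmemT l).mp hh)
    have h2 : f l ≠ t := fun hh => ht (hh ▸ hfe l)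
    omega
  have hgmono : StrictMono g := by
    intro a b hab
    by_cases hA : (a : ℕ) < c <;> by_cases hB : (b : ℕ) < c
    · rw [hgval_lt a hA, hgval_lt b hB]
      exact f.strictMono (by simpa using hab)
    · rw [hgval_lt a hA, hgval_eq b hB]
      exact hflt _ hA
    · exfalso; have := Fin.lt_iff_val_lt_val.mp hab; omega
    · exfalso; have := Fin.lt_iff_val_lt_val.mp hab
      have ha' := a.isLt; have hb' := b.isLt; omega
  have hgle : ∀ s' : Fin (c+1), g s' ≤ f (Fin.castLE hc1d s') := by
    intro s'
    by_cases hA : (s' : ℕ) < c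
    · rw [hgval_lt s' hA]
      exact le_of_eq (congrArg f (Fin.ext rfl))
    · rw [hgval_eq s' hA]
      exact le_of_lt (hfge _ (by simpa using hA))
  have hgne : ∀ (s' : Fin (c+1)) (l : Fin d), c + 1 ≤ (l : ℕ) → g s' ≠ f l := by
    intro s' l hl
    by_cases hA : (s' : ℕ) < c
    · rw [hgval_lt s' hA]
      intro hh
      have := f.injective hh
      have : (s' : ℕ) = (l : ℕ) := congrArg Fin.val this
      omega
    · rw [hgval_eq s' hA]
      intro hh
      exact ht (hh ▸ hfe l)
  have himage : Finset.image (⇑f) Finset.univ = e := by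
    ext a
    simp only [Finset.mem_image, Finset.mem_univ, true_and]
    constructor
    · rintro ⟨l, rfl⟩; exact hfe l
    · intro ha; exact hrange a ha
  have hvf : vecOfFin (⇑f) = m j := by
    rw [vecOfFin_eq_vecOfEdge _ f.injective, himage, hme]
  have hmem0 : MvPolynomial.monomial (vecOfFin (⇑f)) (1 : K) ∈ genIdeal K (Set.range m) := by
    rw [hvf]
    exact mem_genIdeal_iff.mpr ⟨m j, ⟨j, rfl⟩, le_refl _⟩
  have hw := hco (⇑f) f.strictMono hmem0 (c+1) hc1d g hgmono hgle hgne
  -- identify the resulting vector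
  set A : Finset (Fin n) := insert t (e.filter (· < t)) with hA
  set B : Finset (Fin n) :=
    (Finset.univ.filter (fun l : Fin d => c + 1 ≤ (l : ℕ))).image (⇑f) with hB
  set e' : Finset (Fin n) := A ∪ B with he'
  have hAmem : ∀ a ∈ A, a ≤ t := by
    intro a ha
    rw [hA, Finset.mem_insert, Finset.mem_filter] at ha
    rcases ha with rfl | ⟨_, h⟩
    · exact le_refl _
    · exact le_of_lt h
  have hBmem : ∀ a ∈ B, t < a := by
    intro a ha
    rw [hB, Finset.mem_image] at ha
    obtain ⟨l, hl, rfl⟩ := ha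
    rw [Finset.mem_filter] at hl
    exact hfge l (by omega)
  have hdisj : Disjoint A B := by
    rw [Finset.disjoint_left]
    intro a ha hb
    exact absurd (hAmem a ha) (not_le.mpr (hBmem a hb))
  have himg_g : Finset.image g Finset.univ = A := by
    ext a
    simp only [Finset.mem_image, Finset.mem_univ, true_and]
    constructor
    · rintro ⟨s', rfl⟩
      by_cases hA' : (s' : ℕ) < c
      · rw [hgval_lt s' hA', hA, Finset.mem_insert, Finset.mem_filter]
        exact Or.inr ⟨hfe _, hflt _ hA'⟩
      · rw [hgval_eq s' hA', hA]; exact Finset.mem_insert_self _ _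
    · intro ha
      rw [hA, Finset.mem_insert, Finset.mem_filter] at ha
      rcases ha with rfl | ⟨hae, hat⟩
      · exact ⟨⟨c, Nat.lt_succ_self c⟩, hgval_eq _ (by simp)⟩
      · obtain ⟨l, rfl⟩ := hrange a hae
        have hlc : (l : ℕ) < c := (hmemT l).mp hat
        refine ⟨⟨l, by omega⟩, ?_⟩
        rw [hgval_lt _ (by simpa using hlc)]
  have hw_eq : ((∑ s' : Fin (c+1), Finsupp.single (g s') 1) +
      ∑ l ∈ Finset.univ.filter (fun l : Fin d => c + 1 ≤ (l : ℕ)),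
        Finsupp.single (f l) 1) = vecOfEdge e' := by
    have h1 : (∑ s' : Fin (c+1), Finsupp.single (g s') 1) = vecOfEdge A := by
      rw [← himg_g, ← vecOfFin_eq_vecOfEdge g hgmono.injective, vecOfFin]
    have h2 : (∑ l ∈ Finset.univ.filter (fun l : Fin d => c + 1 ≤ (l : ℕ)),
        Finsupp.single (f l) 1) = vecOfEdge B := by
      rw [hB, vecOfEdge, Finset.sum_image (fun a _ b _ h => f.injective h)]
    rw [h1, h2, he', vecOfEdge_union hdisj]
  rw [hw_eq] at hw
  -- e' is small
  have hfc : f ⟨c, hcd⟩ ∈ e := hfe _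
  have he'sub : e' ⊆ insert t (e.erase (f ⟨c, hcd⟩)) := by
    intro a ha
    rw [he', Finset.mem_union] at ha
    rcases ha with ha | ha
    · rw [hA, Finset.mem_insert, Finset.mem_filter] at ha
      rcases ha with rfl | ⟨hae, hat⟩
      · exact Finset.mem_insert_self _ _
      · refine Finset.mem_insert_of_mem (Finset.mem_erase.mpr ⟨?_, hae⟩)
        intro hh
        have := hfge ⟨c, hcd⟩ (by simp)
        rw [← hh] at this
        omega
    · rw [hB, Finset.mem_image] at ha
      obtain ⟨l, hl, rfl⟩ := ha
      rw [Finset.mem_filter] at hl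
      refine Finset.mem_insert_of_mem (Finset.mem_erase.mpr ⟨?_, hfe l⟩)
      intro hh
      have : (l : ℕ) = c := congrArg Fin.val (f.injective hh)
      omega
  have he'card : e'.card ≤ d := by
    calc e'.card ≤ (insert t (e.erase (f ⟨c, hcd⟩))).card := Finset.card_le_card he'sub
    _ ≤ (e.erase (f ⟨c, hcd⟩)).card + 1 := Finset.card_insert_le _ _
    _ = d := by rw [Finset.card_erase_of_mem hfc, hcard]; omega
  -- find the earlier generator
  obtain ⟨v, ⟨i', rfl⟩, hle⟩ := mem_genIdeal_iff.mp hw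
  obtain ⟨ei, hei, hmei⟩ := exists_edge hgens i'
  have heicard : ei.card = d := hH ei hei
  have hmi_eq : vecOfEdge e' = m i' := by
    rw [hmei]
    refine eq_vecOfEdge_of_le (vecOfEdge_le_one e') ?_ ?_
    · rw [← hmei]; exact hle
    · rw [vecOfEdge_support, heicard]; exact he'card
  have hte' : t ∈ e' := by
    rw [he', Finset.mem_union, hA]
    exact Or.inl (Finset.mem_insert_self _ _)
  have hlexgt : lexGt (m i') (m j) := by
    refine ⟨t, ?_, ?_⟩
    · intro b hb
      rw [← hmi_eq, hme, vecOfEdge_apply, vecOfEdge_apply]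
      congr 1
      simp only [eq_iff_iff]
      constructor
      · intro hbe'
        rw [he', Finset.mem_union] at hbe'
        rcases hbe' with h' | h'
        · rw [hA, Finset.mem_insert, Finset.mem_filter] at h'
          rcases h' with rfl | ⟨h', _⟩
          · exact absurd hb (lt_irrefl _)
          · exact h'
        · exact absurd (hBmem b h') (by omega)
      · intro hbe
        rw [he', Finset.mem_union, hA, Finset.mem_insert, Finset.mem_filter]
        exact Or.inl (Or.inr ⟨hbe, hb⟩)
    · rw [← hmi_eq, hme, vecOfEdge_apply, vecOfEdge_apply, if_pos hte', if_neg ht]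
      omega
  have hij : i' < j := lt_of_lexGt hlex hlexgt
  refine ⟨i', hij, ?_⟩
  calc m i' = vecOfEdge e' := hmi_eq.symm
  _ ≤ vecOfEdge (insert t e) := by
      rw [vecOfEdge_le_iff]
      intro a ha
      rw [he', Finset.mem_union] at ha
      rcases ha with ha | ha
      · rw [hA, Finset.mem_insert, Finset.mem_filter] at ha
        rcases ha with rfl | ⟨h', _⟩
        · exact Finset.mem_insert_self _ _
        · exact Finset.mem_insert_of_mem h'
      · rw [hB, Finset.mem_image] at ha
        obtain ⟨l, _, rfl⟩ := ha
        exact Finset.mem_insert_of_mem (hfe l)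
  _ = m j + Finsupp.single t 1 := by rw [vecOfEdge_insert ht, hme]

end Swap

section Mset
variable {K : Type*} [Field K] {n k d : ℕ}
variable {H : Finset (Finset (Fin n))} {m : Fin k → (Fin n →₀ ℕ)}

lemma mset_subset (hH : ∀ e ∈ H, e.card = d)
    (hgens : Set.range m = (fun e : Finset (Fin n) => vecOfEdge e) '' ↑H)
    (hlex : LexDec m)
    {j : Fin k} {e : Finset (Fin n)} (he : e ∈ H) (hme : m j = vecOfEdge e)
    {t : Fin n} (ht : t ∈ mset K m j) : t ∉ e ∧ ∃ s ∈ e, t < s := by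
  classical
  have ht' : ∃ i : Fin k, i < j ∧ m i ≤ m j + Finsupp.single t 1 :=
    X_mem_colonJ_iff.mp ht
  obtain ⟨i, hij, hle⟩ := ht'
  obtain ⟨ei, hei, hmei⟩ := exists_edge hgens i
  have hcard : e.card = d := hH e he
  have heicard : ei.card = d := hH ei hei
  have hsub : ei ⊆ insert t e := by
    intro a ha
    have h1 := hle a
    rw [hmei, vecOfEdge_apply, if_pos ha] at h1
    rw [hme] at h1
    simp only [Finsupp.add_apply, vecOfEdge_apply, Finsupp.single_apply] at h1
    by_cases hat : a = t
    · exact hat ▸ Finset.mem_insert_self _ _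
    · have h2 : ¬ (t = a) := fun hh => hat hh.symm
      refine Finset.mem_insert_of_mem ?_
      by_contra hn
      rw [if_neg hn, if_neg h2] at h1
      omega
  have hne : ei ≠ e := by
    intro hh
    have : m i = m j := by rw [hmei, hme, hh]
    have hgt := hlex i j hij
    rw [this] at hgt
    exact lexGt_asymm hgt hgt
  have htei : t ∈ ei := by
    by_contra hn
    have : ei ⊆ e := by
      intro a ha
      rcases Finset.mem_insert.mp (hsub ha) with rfl | h
      · exact absurd ha hn
      · exact h
    exact hne (Finset.eq_of_subset_of_card_le this (by omega))
  have hte : t ∉ e := by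
    intro hn
    have : ei ⊆ e := by
      intro a ha
      rcases Finset.mem_insert.mp (hsub ha) with rfl | h
      · exact hn
      · exact h
    exact hne (Finset.eq_of_subset_of_card_le this (by omega))
  refine ⟨hte, ?_⟩
  obtain ⟨w, hagr, hlt⟩ := hlex i j hij
  have hwei : w ∈ ei := by
    rw [hmei] at hlt
    rw [← vecOfEdge_support ei, Finsupp.mem_support_iff]
    omega
  have hwe : w ∉ e := by
    have h1 := vecOfEdge_le_one ei w
    rw [← hmei] at h1
    rw [hme, vecOfEdge_apply] at hlt
    intro hn
    rw [if_pos hn] at hlt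
    omega
  have hwt : w = t := by
    rcases Finset.mem_insert.mp (hsub hwei) with h | h
    · exact h
    · exact absurd h hwe
  obtain ⟨s, hs, hsei⟩ : ∃ s ∈ e, s ∉ ei := by
    by_contra hn
    push_neg at hn
    exact hne ((Finset.eq_of_subset_of_card_le hn (by omega)).symm)
  refine ⟨s, hs, ?_⟩
  rcases lt_trichotomy t s with h | h | h
  · exact h
  · exact absurd (h ▸ hs) hte
  · exfalso
    have := hagr s (hwt ▸ h)
    rw [hmei, hme, vecOfEdge_apply, vecOfEdge_apply, if_neg hsei, if_pos hs] at this
    omega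

lemma mset_eq (hH : ∀ e ∈ H, e.card = d)
    (hgens : Set.range m = (fun e : Finset (Fin n) => vecOfEdge e) '' ↑H)
    (hlex : LexDec m)
    (hco : CointervalIdeal K d (genIdeal K (Set.range m)))
    {j : Fin k} {e : Finset (Fin n)} (he : e ∈ H) (hme : m j = vecOfEdge e) :
    mset K m j = {t : Fin n | t ∉ e ∧ ∃ s ∈ e, t < s} := by
  ext t
  constructor
  · exact fun ht => mset_subset hH hgens hlex he hme ht
  · rintro ⟨ht, s, hs, hts⟩
    show (MvPolynomial.X t : MvPolynomial (Fin n) K) ∈ colonJ K m j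
    exact X_mem_colonJ_iff.mpr (swap_lemma hH hgens hlex hco he hme ht hs hts)

lemma transversal_mem (hH : ∀ e ∈ H, e.card = d)
    (hgens : Set.range m = (fun e : Finset (Fin n) => vecOfEdge e) '' ↑H)
    (hco : CointervalIdeal K d (genIdeal K (Set.range m)))
    {j : Fin k} {e : Finset (Fin n)} (he : e ∈ H) (hme : m j = vecOfEdge e)
    (g : Fin d → Fin n) (hmono : StrictMono g)
    (hle : ∀ l : Fin d, g l ≤ e.orderEmbOfFin (hH e he) l) :
    Finset.image g Finset.univ ∈ H := by
  classical
  set f := e.orderEmbOfFin (hH e he) with hf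
  have hfe : ∀ l : Fin d, f l ∈ e := fun l => Finset.orderEmbOfFin_mem e (hH e he) l
  have himage : Finset.image (⇑f) Finset.univ = e := by
    ext a
    simp only [Finset.mem_image, Finset.mem_univ, true_and]
    constructor
    · rintro ⟨l, rfl⟩; exact hfe l
    · intro ha
      have : a ∈ Set.range f := by rw [hf, Finset.range_orderEmbOfFin]; exact ha
      exact this
  have hvf : vecOfFin (⇑f) = m j := by
    rw [vecOfFin_eq_vecOfEdge _ f.injective, himage, hme]
  have hmem0 : MvPolynomial.monomial (vecOfFin (⇑f)) (1 : K) ∈ genIdeal K (Set.range m) := by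
    rw [hvf]
    exact mem_genIdeal_iff.mpr ⟨m j, ⟨j, rfl⟩, le_refl _⟩
  have hle' : ∀ s : Fin d, g s ≤ f (Fin.castLE (le_refl d) s) := by
    intro s
    have : Fin.castLE (le_refl d) s = s := Fin.ext rfl
    rw [this]
    exact hle s
  have hne' : ∀ (s : Fin d) (l : Fin d), d ≤ (l : ℕ) → g s ≠ f l := by
    intro s l hl
    exact absurd l.isLt (by omega)
  have hw := hco (⇑f) f.strictMono hmem0 d (le_refl d) g hmono hle' hne'
  have hempty : (Finset.univ.filter (fun l : Fin d => d ≤ (l : ℕ))) = ∅ := by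
    ext l
    simp only [Finset.mem_filter, Finset.mem_univ, true_and, Finset.notMem_empty, iff_false]
    have := l.isLt; omega
  rw [hempty, Finset.sum_empty, add_zero] at hw
  have hw_eq : (∑ s : Fin d, Finsupp.single (g s) 1) =
      vecOfEdge (Finset.image g Finset.univ) := by
    rw [← vecOfFin_eq_vecOfEdge g hmono.injective, vecOfFin]
  rw [hw_eq] at hw
  obtain ⟨v, ⟨i', rfl⟩, hle2⟩ := mem_genIdeal_iff.mp hw
  obtain ⟨ei, hei, hmei⟩ := exists_edge hgens i'
  have hgcard : (Finset.image g Finset.univ).card = d := by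
    rw [Finset.card_image_of_injective _ hmono.injective, Finset.card_univ, Fintype.card_fin]
  have : vecOfEdge (Finset.image g Finset.univ) = m i' := by
    rw [hmei]
    refine eq_vecOfEdge_of_le (vecOfEdge_le_one _) (by rw [← hmei]; exact hle2) ?_
    rw [vecOfEdge_support, hH ei hei, hgcard]
  rw [hmei] at this
  rw [vecOfEdge_inj this]
  exact hei

end Mset

lemma sum_pred_eq {d : ℕ} (c : Fin d → ℕ) (h : ∀ l, 1 ≤ c l) :
    ∑ l : Fin d, c l = (∑ l : Fin d, (c l - 1)) + d := by
  have h1 : ∀ l ∈ Finset.univ, c l = (c l - 1) + 1 :=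
    fun l _ => (Nat.sub_add_cancel (h l)).symm
  rw [Finset.sum_congr rfl h1, Finset.sum_add_distrib]
  simp

/-- for a cointerval `d`-graph `H` with edge ideal `I` (generators
ordered lex-decreasing) and fixed `i ≥ 1`, the map `(m,α) ↦ (σ_1,…,σ_d)` is a
bijection from the pairs `(m,α)`, `m ∈ G(I)`, `α ⊆ set(m)`, `|α| = i−1`, onto the
cells of `X_H` of dimension `i−1`. -/
theorem stmt15 (K : Type*) [Field K] {n k d : ℕ} (hd : 0 < d)
    (H : Finset (Finset (Fin n))) (hH : ∀ e ∈ H, e.card = d)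
    (m : Fin k → (Fin n →₀ ℕ))
    (hgens : Set.range m = (fun e : Finset (Fin n) => vecOfEdge e) '' ↑H)
    (hlex : LexDec m)
    (hco : CointervalIdeal K d (genIdeal K (Set.range m)))
    (i : ℕ) (hi : 1 ≤ i) :
    Set.BijOn (cellOfPair m)
      {p : Fin k × Finset (Fin n) | ↑p.2 ⊆ mset K m p.1 ∧ p.2.card = i - 1}
      {σ : Fin d → Finset (Fin n) |
        (∀ l : Fin d, (σ l).Nonempty) ∧
        (∀ l l' : Fin d, l < l' → ∀ a ∈ σ l, ∀ b ∈ σ l', a < b) ∧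
        (∀ g : Fin d → Fin n, (∀ l : Fin d, g l ∈ σ l) →
          Finset.image g Finset.univ ∈ H) ∧
        (∑ l : Fin d, ((σ l).card - 1)) = i - 1} := by
  classical
  choose E hE hmE using exists_edge hgens
  have hEcard : ∀ j : Fin k, (E j).card = d := fun j => hH _ (hE j)
  have hsupp : ∀ j : Fin k, (m j).support = E j := fun j => by
    rw [hmE j, vecOfEdge_support]
  have hminj : Function.Injective m := by
    intro a b hab
    rcases lt_trichotomy a b with h | h | h
    · have h1 := hlex a b h
      rw [hab] at h1
      exact absurd h1 (fun hh => lexGt_asymm hh hh)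
    · exact h
    · have h1 := hlex b a h
      rw [hab] at h1
      exact absurd h1 (fun hh => lexGt_asymm hh hh)
  have hmset : ∀ j : Fin k, mset K m j = {t : Fin n | t ∉ E j ∧ ∃ s ∈ E j, t < s} :=
    fun j => mset_eq hH hgens hlex hco (hE j) (hmE j)
  have hcell : ∀ (j : Fin k) (α : Finset (Fin n)),
      cellOfPair m (j, α) = cellSigma d (E j) α := by
    intro j α
    funext l
    simp only [cellOfPair, cellSigma]
    rw [hsupp]
  have hdom : ∀ (j : Fin k) (α : Finset (Fin n)), ↑α ⊆ mset K m j →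
      ∀ t ∈ α, t ∉ E j ∧ ∃ s ∈ E j, t < s := by
    intro j α h1 t ht
    have := h1 ht
    rw [hmset] at this
    exact this
  refine ⟨?_, ?_, ?_⟩
  · -- MapsTo
    rintro ⟨j, α⟩ hp
    obtain ⟨hp1, hp2⟩ := hp
    have hα := hdom j α hp1
    show _ ∈ {σ : Fin d → Finset (Fin n) | _}
    rw [Set.mem_setOf_eq, hcell j α]
    refine ⟨?_, ?_, ?_, ?_⟩
    · intro l
      exact ⟨_, orderEmb_mem_cellSigma (hEcard j) l⟩
    · intro l l' hll a ha b hb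
      exact lt_of_cellSigma ha hb hll
    · intro g hg
      have hmono : StrictMono g := fun l l' h => lt_of_cellSigma (hg l) (hg l') h
      have hle : ∀ l : Fin d, g l ≤ (E j).orderEmbOfFin (hH _ (hE j)) l :=
        fun l => le_of_mem_cellSigma _ (hg l)
      exact transversal_mem hH hgens hco (hE j) (hmE j) g hmono hle
    · have hsum := sum_card_cellSigma (hEcard j) hα
      have hpos : ∀ l : Fin d, 1 ≤ (cellSigma d (E j) α l).card := fun l =>
        Finset.card_pos.mpr ⟨_, orderEmb_mem_cellSigma (hEcard j) l⟩
      have h2 : ∑ l : Fin d, (cellSigma d (E j) α l).card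
          = (∑ l : Fin d, ((cellSigma d (E j) α l).card - 1)) + d :=
        sum_pred_eq _ hpos
      rw [hp2] at hsum
      omega
  · -- InjOn
    rintro ⟨j, α⟩ hp ⟨j', α'⟩ hp' heq
    obtain ⟨hp1, hp2⟩ := hp
    obtain ⟨hp1', hp2'⟩ := hp'
    have hα := hdom j α hp1
    have hα' := hdom j' α' hp1'
    rw [hcell j α, hcell j' α'] at heq
    have hff : ∀ l : Fin d, (E j).orderEmbOfFin (hEcard j) l
        = (E j').orderEmbOfFin (hEcard j') l := by
      intro l
      have hmem1 : (E j).orderEmbOfFin (hEcard j) l ∈ cellSigma d (E j') α' l := by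
        rw [← congrFun heq l]
        exact orderEmb_mem_cellSigma (hEcard j) l
      have hmem2 : (E j').orderEmbOfFin (hEcard j') l ∈ cellSigma d (E j) α l := by
        rw [congrFun heq l]
        exact orderEmb_mem_cellSigma (hEcard j') l
      exact le_antisymm (le_of_mem_cellSigma (hEcard j') hmem1)
        (le_of_mem_cellSigma (hEcard j) hmem2)
    have hEE : E j = E j' := by
      rw [← image_orderEmbOfFin (hEcard j), ← image_orderEmbOfFin (hEcard j')]
      exact Finset.image_congr (fun x _ => hff x)
    have hjj : j = j' := hminj (by rw [hmE j, hmE j', hEE])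
    subst hjj
    have hαα : α = α' := by
      have h1 := alpha_eq_cellSigma (hEcard j) hα
      have h2 := alpha_eq_cellSigma (hEcard j) hα'
      rw [h1, heq, ← h2]
    rw [hαα]
  · -- SurjOn
    rintro σ hσ
    obtain ⟨hne, hord, htrans, hdim⟩ := hσ
    set f : Fin d → Fin n := fun l => (σ l).max' (hne l) with hf
    have hfmem : ∀ l, f l ∈ σ l := fun l => (σ l).max'_mem (hne l)
    have hfmono : StrictMono f := fun l1 l2 h => hord l1 l2 h _ (hfmem l1) _ (hfmem l2)
    have hedge : Finset.image f Finset.univ ∈ H := htrans f hfmem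
    obtain ⟨j, hj⟩ : ∃ j : Fin k, m j = vecOfEdge (Finset.image f Finset.univ) := by
      have : vecOfEdge (Finset.image f Finset.univ) ∈ Set.range m := by
        rw [hgens]
        exact ⟨_, hedge, rfl⟩
      exact this
    have hEj : E j = Finset.image f Finset.univ := by
      apply vecOfEdge_inj
      rw [← hmE j, hj]
    have hecard : (Finset.image f Finset.univ).card = d := by rw [← hEj]; exact hEcard j
    have hcnt : ∀ (l : Fin d), ∀ a ∈ σ l,
        ((Finset.image f Finset.univ).filter (· < a)).card = (l : ℕ) :=
      fun l a ha => count_image_max' hne hord ha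
    have hfimage : ∀ l : Fin d, f l ∈ Finset.image f Finset.univ :=
      fun l => Finset.mem_image.mpr ⟨l, Finset.mem_univ l, rfl⟩
    have hαfacts : ∀ t ∈ (Finset.univ.biUnion σ) \ (Finset.image f Finset.univ),
        t ∉ Finset.image f Finset.univ ∧ ∃ s ∈ Finset.image f Finset.univ, t < s := by
      intro t htα
      rw [Finset.mem_sdiff] at htα
      obtain ⟨htu, hte⟩ := htα
      obtain ⟨l, -, htl⟩ := Finset.mem_biUnion.mp htu
      refine ⟨hte, f l, hfimage l, ?_⟩
      have h1 : t ≤ f l := Finset.le_max' _ _ htl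
      have h2 : t ≠ f l := fun hh => hte (hh ▸ hfimage l)
      exact lt_of_le_of_ne h1 h2
    have hσeq : cellSigma d (Finset.image f Finset.univ)
        ((Finset.univ.biUnion σ) \ (Finset.image f Finset.univ)) = σ := by
      funext l
      ext a
      rw [mem_cellSigma]
      constructor
      · rintro ⟨hau, hcnt'⟩
        have hab : a ∈ Finset.univ.biUnion σ := by
          rcases Finset.mem_union.mp hau with h | h
          · obtain ⟨l'', -, rfl⟩ := Finset.mem_image.mp h
            exact Finset.mem_biUnion.mpr ⟨l'', Finset.mem_univ _, hfmem l''⟩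
          · exact (Finset.mem_sdiff.mp h).1
        obtain ⟨l', -, hal'⟩ := Finset.mem_biUnion.mp hab
        have hc1 := hcnt l' a hal'
        have hl : l' = l := Fin.ext (by omega)
        exact hl ▸ hal'
      · intro ha
        refine ⟨?_, hcnt l a ha⟩
        by_cases hae : a ∈ Finset.image f Finset.univ
        · exact Finset.mem_union_left _ hae
        · exact Finset.mem_union_right _ (Finset.mem_sdiff.mpr
            ⟨Finset.mem_biUnion.mpr ⟨l, Finset.mem_univ _, ha⟩, hae⟩)
    have hαcard : ((Finset.univ.biUnion σ) \ (Finset.image f Finset.univ)).card = i - 1 := by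
      have hsum := sum_card_cellSigma hecard hαfacts
      rw [hσeq] at hsum
      have hpos : ∀ l : Fin d, 1 ≤ (σ l).card := fun l => Finset.card_pos.mpr (hne l)
      have h2 : ∑ l : Fin d, (σ l).card = (∑ l : Fin d, ((σ l).card - 1)) + d :=
        sum_pred_eq _ hpos
      rw [hdim] at h2
      omega
    refine ⟨(j, (Finset.univ.biUnion σ) \ (Finset.image f Finset.univ)), ⟨?_, hαcard⟩, ?_⟩
    · intro t ht
      rw [hmset j]
      have := hαfacts t ht
      rw [← hEj] at this
      exact this
    · rw [hcell j _, hEj, hσeq]
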